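/- Let p : ℝⁿ → (0,∞) be a variable exponent that is globally log-Hölder continuous. For a measurable set A ⊂ ℝⁿ with 0 < |A| < ∞ define 1/p_A := (1/|A|) ∫_A (1/p(x)) dx. Then there exists a constant C > 0 such that for every cube Q with 0 < |Q| ≤ 1 and every measurable set E ⊂ Q with |E| > 0, one has |Q|^{1/p_Q − 1/p_E} ≤ C. -/

import Mathlib

open MeasureTheory
open scoped ENNReal NNReal ComplexOrder

noncomputable section

namespace VarBesov

/-- `ℝⁿ` with the Euclidean norm. -/
abbrev Rn (n : ℕ) := EuclideanSpace ℝ (Fin n)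

/-- Local log-Hölder condition with constant `c`. -/
def LocLH {n : ℕ} (c : ℝ) (r : Rn n → ℝ) : Prop :=
  ∀ x y : Rn n, x ≠ y → |r x - r y| ≤ c / Real.log (Real.exp 1 + 1 / dist x y)

/-- Global log-Hölder continuity. -/
def GlobLH {n : ℕ} (r : Rn n → ℝ) : Prop :=
  (∃ c > 0, LocLH c r) ∧
    ∃ rinf : ℝ, ∃ cinf > 0, ∀ x : Rn n, |r x - rinf| ≤ cinf / Real.log (Real.exp 1 + ‖x‖)

/-- A variable exponent: measurable, pointwise positive, with positive essential
infimum and finite essential supremum. -/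
def IsVarExp {n : ℕ} (p : Rn n → ℝ) : Prop :=
  Measurable p ∧ (∀ x, 0 < p x) ∧ 0 < essInf p volume ∧
    Filter.IsBoundedUnder (· ≤ ·) (ae volume) p

/-- The Luxemburg (quasi-)norm of `f` in the variable Lebesgue space `L^{p(·)}`,
valued in `ℝ≥0∞` (it is `∞` iff no admissible `λ` exists). -/
def luxNorm {n : ℕ} (p : Rn n → ℝ) (f : Rn n → ℝ) : ℝ≥0∞ :=
  sInf {lam : ℝ≥0∞ | ∫⁻ x, (ENNReal.ofReal |f x| / lam) ^ p x ≤ 1}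

/-- The mixed Lebesgue-sequence norm `‖{f_j}‖_{ℓ^{q(·)}(L^{p(·)})}`. -/
def mixedNorm {n : ℕ} (p q : Rn n → ℝ) (f : ℕ → Rn n → ℝ) : ℝ≥0∞ :=
  sInf {mu : ℝ≥0∞ |
    ∑' j : ℕ, luxNorm (fun x => p x / q x)
      (fun x => ((ENNReal.ofReal |f j x| / mu) ^ q x).toReal) ≤ 1}

/-- The axis-parallel (half-open) cube with lower corner `a` and side length `h`. -/
def cube {n : ℕ} (a : Rn n) (h : ℝ) : Set (Rn n) := {x | ∀ i, a i ≤ x i ∧ x i < a i + h}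

/-- The dilate `λQ` of the cube with corner `a` and side `h`, concentric with it. -/
def cubeDil {n : ℕ} (a : Rn n) (h lam : ℝ) : Set (Rn n) :=
  cube ((EuclideanSpace.equiv (Fin n) ℝ).symm fun i => a i - (lam - 1) * h / 2) (lam * h)

/-- Index of a dyadic cube `Q_{j,k} = 2^{-j}([0,1)ⁿ + k)` in `𝒬_+`. -/
abbrev DIdx (n : ℕ) := ℕ × (Fin n → ℤ)

/-- Side length of the dyadic cube. -/
def dSide {n : ℕ} (J : DIdx n) : ℝ := (2 : ℝ) ^ (-(J.1 : ℤ))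

/-- Lower corner of the dyadic cube. -/
def dCorner {n : ℕ} (J : DIdx n) : Rn n :=
  (EuclideanSpace.equiv (Fin n) ℝ).symm fun i => dSide J * (J.2 i : ℝ)

/-- The dyadic cube as a set. -/
def dCube {n : ℕ} (J : DIdx n) : Set (Rn n) := cube (dCorner J) (dSide J)

/-- Center of the dyadic cube. -/
def dCenter {n : ℕ} (J : DIdx n) : Rn n :=
  (EuclideanSpace.equiv (Fin n) ℝ).symm fun i => dSide J * ((J.2 i : ℝ) + 1 / 2)

/-- The index `k` such that `x ∈ Q_{j,k}`. -/
def cubeOf {n : ℕ} (j : ℕ) (x : Rn n) : Fin n → ℤ := fun i => ⌊(2 : ℝ) ^ (j : ℕ) * x i⌋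

/-- Euclidean norm of a vector in `ℂ^m`. -/
def evnorm {m : ℕ} (v : Fin m → ℂ) : ℝ := Real.sqrt (∑ i, ‖v i‖ ^ 2)

/-- Operator norm of an `m × m` complex matrix with respect to the Euclidean norm. -/
def opNorm {m : ℕ} (A : Matrix (Fin m) (Fin m) ℂ) : ℝ :=
  ⨆ z : {z : Fin m → ℂ // evnorm z ≤ 1}, evnorm (A.mulVec z.1)

/-- A matrix weight: measurable entries, a.e. positive definite (hence Hermitian)
values, locally integrable entries. -/
def IsMatrixWeight {n m : ℕ} (W : Rn n → Matrix (Fin m) (Fin m) ℂ) : Prop :=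
  (∀ i j, Measurable fun x => W x i j) ∧
  (∀ᵐ x ∂(volume : Measure (Rn n)), (W x).PosDef) ∧
  (∀ i j, LocallyIntegrable (fun x => W x i j) volume)

/-- The quantity `(1/|S|) ∫_S log( ‖ ‖W(·)W⁻¹(y)‖ 1_T ‖_{L^{p(·)}} / ‖1_T‖_{L^{p(·)}} ) dy`. -/
def apIntegrand {n m : ℕ} (p : Rn n → ℝ) (W : Rn n → Matrix (Fin m) (Fin m) ℂ)
    (S T : Set (Rn n)) : ℝ :=
  (volume S).toReal⁻¹ *
    ∫ y in S, Real.log ((luxNorm p (T.indicator fun x => opNorm (W x * (W y)⁻¹)) /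
      luxNorm p (T.indicator fun _ => 1)).toReal)

/-- Matrix `𝒜_{p(·),∞}` weight. -/
def IsApInfty {n m : ℕ} (p : Rn n → ℝ) (W : Rn n → Matrix (Fin m) (Fin m) ℂ) : Prop :=
  IsMatrixWeight W ∧ ∃ C : ℝ, ∀ (a : Rn n) (h : ℝ), 0 < h →
    Real.exp (apIntegrand p W (cube a h) (cube a h)) ≤ C

/-- `W` has `𝒜_{p(·),∞}`-upper dimension `d`. -/
def HasUpperDim {n m : ℕ} (p : Rn n → ℝ) (W : Rn n → Matrix (Fin m) (Fin m) ℂ)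
    (d : ℝ) : Prop :=
  0 ≤ d ∧ ∃ C : ℝ, ∀ (a : Rn n) (h lam : ℝ), 0 < h → 1 ≤ lam →
    Real.exp (apIntegrand p W (cube a h) (cubeDil a h lam)) ≤ C * lam ^ d

/-- `W` has `𝒜_{p(·),∞}`-lower dimension `d`. -/
def HasLowerDim {n m : ℕ} (p : Rn n → ℝ) (W : Rn n → Matrix (Fin m) (Fin m) ℂ)
    (d : ℝ) : Prop :=
  0 ≤ d ∧ ∃ C : ℝ, ∀ (a : Rn n) (h lam : ℝ), 0 < h → 1 ≤ lam →
    Real.exp (apIntegrand p W (cubeDil a h lam) (cube a h)) ≤ C * lam ^ d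

/-- `d^{upper}_{p(·),∞}(W)`: the infimum of all upper dimensions of `W`. -/
def dUpper {n m : ℕ} (p : Rn n → ℝ) (W : Rn n → Matrix (Fin m) (Fin m) ℂ) : ℝ :=
  sInf {d : ℝ | HasUpperDim p W d}

/-- `J(W) = n / min(1, p_−) + d^{upper}_{p(·),∞}(W)`. -/
def JW {n m : ℕ} (p : Rn n → ℝ) (W : Rn n → Matrix (Fin m) (Fin m) ℂ) : ℝ :=
  (n : ℝ) / min 1 (essInf p volume) + dUpper p W

/-- `{A_Q}` is a family of reducing operators of order `p(·)` for `W`,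
with comparison constants `c₁ ≤ c₂`. -/
def IsReducing {n m : ℕ} (p : Rn n → ℝ) (W : Rn n → Matrix (Fin m) (Fin m) ℂ)
    (A : DIdx n → Matrix (Fin m) (Fin m) ℂ) (c₁ c₂ : ℝ) : Prop :=
  0 < c₁ ∧ c₁ ≤ c₂ ∧ (∀ J, (A J).PosDef) ∧
    ∀ (J : DIdx n) (z : Fin m → ℂ),
      ENNReal.ofReal (c₁ * evnorm ((A J).mulVec z)) ≤
          luxNorm p ((dCube J).indicator fun x => evnorm ((W x).mulVec z)) /
            luxNorm p ((dCube J).indicator fun _ => 1) ∧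
      luxNorm p ((dCube J).indicator fun x => evnorm ((W x).mulVec z)) /
          luxNorm p ((dCube J).indicator fun _ => 1) ≤
        ENNReal.ofReal (c₂ * evnorm ((A J).mulVec z))

/-- `t_j(x) = Σ_{Q ∈ 𝒬_j} |Q|^{-1/2} 1_Q(x) t_Q` (only one term is nonzero). -/
def seqFun {n m : ℕ} (t : DIdx n → (Fin m → ℂ)) (j : ℕ) (x : Rn n) : Fin m → ℂ :=
  ((2 : ℝ) ^ (((j : ℝ) * n) / 2)) • t (j, cubeOf j x)

/-- Matrix-weighted variable Besov sequence norm `‖t‖_{b^{s(·)}_{p(·),q(·)}(W)}`. -/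
def besovNormW {n m : ℕ} (p q s : Rn n → ℝ) (W : Rn n → Matrix (Fin m) (Fin m) ℂ)
    (t : DIdx n → (Fin m → ℂ)) : ℝ≥0∞ :=
  mixedNorm p q fun j x => (2 : ℝ) ^ ((j : ℝ) * s x) * evnorm ((W x).mulVec (seqFun t j x))

/-- Averaging matrix-weighted variable Besov sequence norm `‖t‖_{b^{s(·)}_{p(·),q(·)}(𝔸)}`. -/
def besovNormA {n m : ℕ} (p q s : Rn n → ℝ) (A : DIdx n → Matrix (Fin m) (Fin m) ℂ)
    (t : DIdx n → (Fin m → ℂ)) : ℝ≥0∞ :=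
  mixedNorm p q fun j x => (2 : ℝ) ^ ((j : ℝ) * s x) *
    evnorm ((A (j, cubeOf j x)).mulVec (seqFun t j x))

/-- The standard almost-diagonal majorant `b^{DEF}_{Q,R}`. -/
def bDEF {n : ℕ} (D Eexp F : ℝ) (J K : DIdx n) : ℝ :=
  (1 + dist (dCenter J) (dCenter K) / max (dSide J) (dSide K)) ^ (-D) *
    (if dSide J ≤ dSide K then (dSide J / dSide K) ^ Eexp else (dSide K / dSide J) ^ F)

/-- `(D,E,F)`-almost diagonal infinite matrix. -/
def IsAlmostDiagonal {n : ℕ} (D Eexp F : ℝ) (b : DIdx n → DIdx n → ℂ) : Prop :=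
  ∃ C : ℝ, ∀ J K : DIdx n, ‖b J K‖ ≤ C * bDEF D Eexp F J K

/-- Partial derivative in the `i`-th coordinate direction. -/
def pderiv' {n : ℕ} (i : Fin n) (f : Rn n → ℝ) : Rn n → ℝ :=
  fun x => fderiv ℝ f x (EuclideanSpace.single i 1)

/-- Multi-index partial derivative `∂^γ f`. -/
def mderiv {n : ℕ} (γ : Fin n → ℕ) (f : Rn n → ℝ) : Rn n → ℝ :=
  ((List.ofFn fun i : Fin n => (pderiv' i)^[γ i]).foldr (· ∘ ·) id) f

/-- `⌊⌊N⌋⌋ = max {k ∈ ℤ : k < N}`. -/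
def lfloor (N : ℝ) : ℤ := ⌈N⌉ - 1

/-- `(u_K)_Q(x) = |Q|^{-1/2} (1 + |x − x_Q|/l(Q))^{-K}`. -/
def uKQ {n : ℕ} (K : ℝ) (J : DIdx n) (x : Rn n) : ℝ :=
  dSide J ^ (-(n : ℝ) / 2) * (1 + dist x (dCenter J) / dSide J) ^ (-K)

/-- A smooth `(K,L,M,N)`-molecule on the dyadic cube `J`. -/
structure IsMolecule {n : ℕ} (K L M N : ℝ) (J : DIdx n) (f : Rn n → ℝ) : Prop where
  smooth : ContDiff ℝ ((max (lfloor N) 0).toNat : ℕ) f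
  decay : ∀ x, |f x| ≤ uKQ K J x
  vanish : dSide J < 1 → ∀ γ : Fin n → ℕ, ((∑ i, γ i : ℕ) : ℝ) ≤ L →
    (∫ x, (∏ i, x i ^ γ i) * f x) = 0
  derivBound : ∀ γ : Fin n → ℕ, ((∑ i, γ i : ℕ) : ℝ) < N → ∀ x,
    |mderiv γ f x| ≤ dSide J ^ (-((∑ i, γ i : ℕ) : ℝ)) * uKQ M J x
  holder : ∀ γ : Fin n → ℕ, ((∑ i, γ i : ℕ) : ℤ) = lfloor N → ∀ x y,
    |mderiv γ f x - mderiv γ f y| ≤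
      dSide J ^ (-((∑ i, γ i : ℕ) : ℝ)) * (dist x y / dSide J) ^ (N - (lfloor N : ℝ)) *
        ⨆ z : {z : Rn n // ‖z‖ ≤ dist x y}, uKQ M J (x + z.1)

/-- Projection `ℝ^{n+1} → ℝⁿ` forgetting the last coordinate. -/
def projLast {n : ℕ} (x : Rn (n + 1)) : Rn n :=
  (EuclideanSpace.equiv (Fin n) ℝ).symm fun i => x i.castSucc

/-- An exponent on `ℝⁿ` lifted to `ℝ^{n+1}`, independent of the last coordinate. -/
def liftExp {n : ℕ} (p : Rn n → ℝ) : Rn (n + 1) → ℝ := fun x => p (projLast x)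

/-- The dyadic cube `Q(I,k) = I × [l(I)k, l(I)(k+1))` in `ℝ^{n+1}`. -/
def QIk {n : ℕ} (I : DIdx n) (k : ℤ) : DIdx (n + 1) := (I.1, Fin.snoc I.2 k)



lemma cube_eq_preimage {n : ℕ} (a : Rn n) (h : ℝ) :
    cube a h = ((MeasurableEquiv.toLp 2 (Fin n → ℝ)).symm) ⁻¹'
      (Set.univ.pi fun i => Set.Ico (a i) (a i + h)) := by
  ext x
  simp [cube, Set.mem_pi, MeasurableEquiv.coe_toLp_symm]

lemma measurableSet_cube {n : ℕ} (a : Rn n) (h : ℝ) : MeasurableSet (cube a h) := by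
  rw [cube_eq_preimage]
  exact (MeasurableEquiv.toLp 2 (Fin n → ℝ)).symm.measurable
    (MeasurableSet.univ_pi fun i => measurableSet_Ico)

lemma volume_cube {n : ℕ} (a : Rn n) (h : ℝ) (hh : 0 ≤ h) :
    volume (cube a h) = ENNReal.ofReal (h ^ n) := by
  rw [cube_eq_preimage,
    (EuclideanSpace.volume_preserving_symm_measurableEquiv_toLp (Fin n)).measure_preimage
      (MeasurableSet.univ_pi fun i => measurableSet_Ico).nullMeasurableSet,
    volume_pi_pi]
  simp [Real.volume_Ico, ENNReal.ofReal_pow hh]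

lemma dist_le_of_mem_cube {n : ℕ} {a : Rn n} {h : ℝ} (hh : 0 ≤ h) {x y : Rn n}
    (hx : x ∈ cube a h) (hy : y ∈ cube a h) : dist x y ≤ h * Real.sqrt n := by
  have key : dist x y ≤ Real.sqrt (∑ _i : Fin n, h ^ 2) := by
    rw [EuclideanSpace.dist_eq]
    apply Real.sqrt_le_sqrt
    apply Finset.sum_le_sum
    intro i _
    have h1 := hx i
    have h2 := hy i
    have hxy : |x i - y i| ≤ h := by
      rw [abs_le]; constructor <;> nlinarith [h1.1, h1.2, h2.1, h2.2]
    rw [Real.dist_eq]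
    calc |x i - y i| ^ 2 = (x i - y i) ^ 2 := sq_abs _
      _ ≤ h ^ 2 := by nlinarith [abs_nonneg (x i - y i), sq_abs (x i - y i)]
  calc dist x y ≤ Real.sqrt (∑ _i : Fin n, h ^ 2) := key
    _ = h * Real.sqrt n := by
        rw [Finset.sum_const, Finset.card_univ, Fintype.card_fin, nsmul_eq_mul,
          Real.sqrt_mul (by positivity), Real.sqrt_sq hh, mul_comm]

lemma pointwise_lower_bound {n : ℕ} {p : Rn n → ℝ} {c : ℝ} (hc : 0 < c) (hLH : LocLH c p)
    (hp0 : ∀ x, 0 < p x) (hm : 0 < essInf p volume) :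
    ∀ x, essInf p volume / 2 ≤ p x := by
  intro x
  by_contra hx
  push_neg at hx
  set m := essInf p volume with hmdef
  have hbdd : Filter.IsBoundedUnder (· ≥ ·) (ae (volume : Measure (Rn n))) p :=
    Filter.isBoundedUnder_of ⟨0, fun y => (hp0 y).le⟩
  have hae : ∀ᵐ y ∂(volume : Measure (Rn n)), 3 * m / 4 < p y :=
    ae_lt_of_lt_essInf (by linarith) hbdd
  rw [Filter.eventually_iff, mem_ae_iff] at hae
  set δ := (Real.exp (c / (m / 4)))⁻¹ with hδdef
  have hδ : 0 < δ := by positivity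
  have hball : Metric.ball x δ ⊆ {y | 3 * m / 4 < p y}ᶜ := by
    intro y hy
    rcases eq_or_ne y x with rfl | hne
    · simp only [Set.mem_compl_iff, Set.mem_setOf_eq, not_lt]
      linarith
    · have hd : dist x y < δ := by rw [dist_comm]; exact Metric.mem_ball.mp hy
      have hd0 : 0 < dist x y := dist_pos.mpr (fun hxy => hne hxy.symm)
      have hm4 : 0 < m / 4 := by linarith
      have h1 : Real.exp (c / (m / 4)) < 1 / dist x y := by
        rw [lt_div_iff₀ hd0]
        have : dist x y < (Real.exp (c / (m / 4)))⁻¹ := hd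
        calc Real.exp (c / (m / 4)) * dist x y
            < Real.exp (c / (m / 4)) * (Real.exp (c / (m / 4)))⁻¹ := by
              apply mul_lt_mul_of_pos_left this (Real.exp_pos _)
          _ = 1 := mul_inv_cancel₀ (Real.exp_ne_zero _)
      have hlog : c / (m / 4) < Real.log (Real.exp 1 + 1 / dist x y) := by
        calc c / (m / 4) = Real.log (Real.exp (c / (m / 4))) := (Real.log_exp _).symm
          _ < Real.log (Real.exp 1 + 1 / dist x y) := by
              apply Real.log_lt_log (Real.exp_pos _)
              have := Real.exp_pos 1
              linarith
      have hL0 : 0 < Real.log (Real.exp 1 + 1 / dist x y) := by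
        have : 0 < c / (m / 4) := by positivity
        linarith
      have hosc : |p x - p y| < m / 4 := by
        refine lt_of_le_of_lt (hLH x y hne.symm) ?_
        rw [div_lt_iff₀ hL0]
        calc c = (c / (m / 4)) * (m / 4) := by field_simp
          _ < Real.log (Real.exp 1 + 1 / dist x y) * (m / 4) := by
              apply mul_lt_mul_of_pos_right hlog hm4
          _ = m / 4 * Real.log (Real.exp 1 + 1 / dist x y) := mul_comm _ _
      simp only [Set.mem_compl_iff, Set.mem_setOf_eq, not_lt]
      have := abs_lt.mp hosc
      linarith [this.1]
  have hpos : 0 < volume (Metric.ball x δ) := Metric.measure_ball_pos volume x hδ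
  have hzero : volume (Metric.ball x δ) = 0 := measure_mono_null hball hae
  rw [hzero] at hpos
  exact lt_irrefl _ hpos

set_option maxHeartbeats 1600000 in
theorem statement3 {n : ℕ} (hn : 1 ≤ n) (p : Rn n → ℝ) (hp : IsVarExp p) (hpLH : GlobLH p) :
    ∃ C > 0, ∀ (a : Rn n) (h : ℝ), 0 < h → volume (cube a h) ≤ 1 →
      ∀ E : Set (Rn n), MeasurableSet E → E ⊆ cube a h → 0 < volume E →
        ((volume (cube a h)).toReal) ^
            (((volume (cube a h)).toReal⁻¹ * ∫ x in cube a h, 1 / p x) -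
              ((volume E).toReal⁻¹ * ∫ x in E, 1 / p x)) ≤ C := by
  obtain ⟨⟨c, hc, hLH⟩, -⟩ := hpLH
  obtain ⟨pmeas, hp0, hm, -⟩ := hp
  have hb : ∀ x, essInf p volume / 2 ≤ p x := pointwise_lower_bound hc hLH hp0 hm
  set b : ℝ := essInf p volume / 2 with hbdef
  have hb0 : 0 < b := by positivity
  set c' : ℝ := c / b ^ 2 with hc'def
  have hc'0 : 0 < c' := by positivity
  refine ⟨Real.exp (2 * n * c' * (Real.log (Real.sqrt n) + 1)), Real.exp_pos _, ?_⟩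
  intro a h hh hQ1 E hEmeas hEQ hE0
  have hsn : 1 ≤ Real.sqrt n := Real.one_le_sqrt.mpr (by exact_mod_cast hn)
  have hsn0 : 0 < Real.sqrt n := by linarith
  have hvol := volume_cube a h hh.le
  have hvQ : (volume (cube a h)).toReal = h ^ n := by
    rw [hvol, ENNReal.toReal_ofReal (by positivity)]
  have hhn1 : h ^ n ≤ 1 := by
    rw [hvol] at hQ1
    exact (ENNReal.ofReal_le_one).mp hQ1
  have hh1 : h ≤ 1 := by
    by_contra hcon
    push_neg at hcon
    have : 1 < h ^ n := one_lt_pow₀ hcon (by omega)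
    linarith
  set L := Real.log (Real.exp 1 + 1 / (h * Real.sqrt n)) with hLdef
  have ht0 : 0 ≤ 1 / (h * Real.sqrt n) := by positivity
  have hL1 : 1 ≤ L := by
    calc (1 : ℝ) = Real.log (Real.exp 1) := (Real.log_exp 1).symm
      _ ≤ L := Real.log_le_log (Real.exp_pos 1) (by linarith)
  have hL0 : 0 < L := by linarith
  set ω := c' / L with hωdef
  have hω0 : 0 ≤ ω := by positivity
  have hamem : a ∈ cube a h := fun i => ⟨le_refl _, by linarith⟩
  have hosc : ∀ x ∈ cube a h, |1 / p x - 1 / p a| ≤ ω := by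
    intro x hx
    rcases eq_or_ne x a with rfl | hne
    · simpa using hω0
    · have hd0 : 0 < dist x a := dist_pos.mpr hne
      have hdle : dist x a ≤ h * Real.sqrt n := dist_le_of_mem_cube hh.le hx hamem
      have hLle : L ≤ Real.log (Real.exp 1 + 1 / dist x a) := by
        apply Real.log_le_log (by positivity)
        have : 1 / (h * Real.sqrt n) ≤ 1 / dist x a :=
          one_div_le_one_div_of_le hd0 hdle
        linarith
      have hp_osc : |p x - p a| ≤ c / Real.log (Real.exp 1 + 1 / dist x a) := hLH x a hne
      have hpx := hb x
      have hpa := hb a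
      have hpx0 := hp0 x
      have hpa0 := hp0 a
      have e1 : 1 / p x - 1 / p a = (p a - p x) / (p x * p a) := by
        field_simp
      rw [e1, abs_div, abs_of_pos (by positivity : (0:ℝ) < p x * p a)]
      have hprod : b ^ 2 ≤ p x * p a := by nlinarith
      have hLxa0 : 0 < Real.log (Real.exp 1 + 1 / dist x a) := lt_of_lt_of_le hL0 hLle
      calc |p a - p x| / (p x * p a)
          ≤ (c / Real.log (Real.exp 1 + 1 / dist x a)) / b ^ 2 :=
            div_le_div₀ (div_nonneg hc.le hLxa0.le) (abs_sub_comm (p a) (p x) ▸ hp_osc)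
              (by positivity) hprod
        _ = c' / Real.log (Real.exp 1 + 1 / dist x a) := by
            rw [div_right_comm]
        _ ≤ c' / L := by
            apply div_le_div_of_nonneg_left hc'0.le hL0 hLle
  have hQfin : volume (cube a h) < ⊤ := lt_of_le_of_lt hQ1 ENNReal.one_lt_top
  have hEfin : volume E < ⊤ := lt_of_le_of_lt (measure_mono hEQ) hQfin
  have hvE : 0 < (volume E).toReal := ENNReal.toReal_pos hE0.ne' hEfin.ne
  have hvQ0 : 0 < (volume (cube a h)).toReal := by rw [hvQ]; positivity
  have fmeas : Measurable fun x : Rn n => 1 / p x := measurable_const.div pmeas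
  have hbound : ∀ x : Rn n, |1 / p x| ≤ 1 / b := by
    intro x
    rw [abs_of_pos (by have := hp0 x; positivity)]
    exact one_div_le_one_div_of_le hb0 (hb x)
  have hintQ : IntegrableOn (fun x => 1 / p x) (cube a h) volume := by
    refine Integrable.mono' (integrableOn_const hQfin.ne)
      fmeas.aestronglyMeasurable (ae_of_all _ hbound)
  have hintE : IntegrableOn (fun x => 1 / p x) E volume := hintQ.mono_set hEQ
  have hIQ : (1 / p a - ω) * (volume (cube a h)).toReal ≤ ∫ x in cube a h, 1 / p x := by
    have step : (∫ _x in cube a h, (1 / p a - ω)) ≤ ∫ x in cube a h, 1 / p x :=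
      setIntegral_mono_on (integrableOn_const hQfin.ne) hintQ
      (measurableSet_cube a h)
      (fun x hx => by
        have := abs_le.mp (hosc x hx)
        linarith [this.1])
    rw [setIntegral_const, smul_eq_mul, measureReal_def] at step
    linarith [step]
  have hIE : (∫ x in E, 1 / p x) ≤ (1 / p a + ω) * (volume E).toReal := by
    have step : (∫ x in E, 1 / p x) ≤ ∫ _x in E, (1 / p a + ω) :=
      setIntegral_mono_on hintE (integrableOn_const hEfin.ne) hEmeas
      (fun x hx => by
        have := abs_le.mp (hosc x (hEQ hx))
        linarith [this.2])
    rw [setIntegral_const, smul_eq_mul, measureReal_def] at step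
    linarith [step]
  have havgQ : 1 / p a - ω ≤ (volume (cube a h)).toReal⁻¹ * ∫ x in cube a h, 1 / p x := by
    rw [inv_mul_eq_div, le_div_iff₀ hvQ0]
    linarith
  have havgE : (volume E).toReal⁻¹ * ∫ x in E, 1 / p x ≤ 1 / p a + ω := by
    rw [inv_mul_eq_div, div_le_iff₀ hvE]
    linarith
  have hδlb : -(2 * ω) ≤
      (volume (cube a h)).toReal⁻¹ * (∫ x in cube a h, 1 / p x) -
        (volume E).toReal⁻¹ * ∫ x in E, 1 / p x := by
    linarith
  have hX0 : 0 < h ^ n := by positivity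
  have hX1 : (volume (cube a h)).toReal ≤ 1 := by rw [hvQ]; exact hhn1
  calc ((volume (cube a h)).toReal) ^ ((volume (cube a h)).toReal⁻¹ *
          (∫ x in cube a h, 1 / p x) - (volume E).toReal⁻¹ * ∫ x in E, 1 / p x)
      ≤ ((volume (cube a h)).toReal) ^ (-(2 * ω)) :=
        Real.rpow_le_rpow_of_exponent_ge hvQ0 hX1 hδlb
    _ ≤ Real.exp (2 * n * c' * (Real.log (Real.sqrt n) + 1)) := by
        rw [Real.rpow_def_of_pos hvQ0, hvQ]
        apply Real.exp_le_exp.mpr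
        have hlogh : Real.log (h ^ n) = n * Real.log h := by rw [Real.log_pow]
        have hnl : -Real.log h ≤ Real.log (Real.sqrt n) + L := by
          have e2 : h⁻¹ = Real.sqrt n * (h * Real.sqrt n)⁻¹ := by field_simp
          rw [← Real.log_inv, e2, Real.log_mul (ne_of_gt hsn0) (by positivity)]
          have hlast : Real.log (h * Real.sqrt n)⁻¹ ≤ L := by
            apply Real.log_le_log (by positivity)
            rw [← one_div]
            linarith [Real.exp_pos 1]
          linarith
        have hlsn : 0 ≤ Real.log (Real.sqrt n) := Real.log_nonneg hsn
        have hωlog : ω * (-Real.log h) ≤ c' * (Real.log (Real.sqrt n) + 1) := by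
          have h1 : ω * (-Real.log h) ≤ ω * (Real.log (Real.sqrt n) + L) :=
            mul_le_mul_of_nonneg_left hnl hω0
          have h2 : ω * (Real.log (Real.sqrt n) + L) =
              c' / L * Real.log (Real.sqrt n) + c' := by
            rw [hωdef]
            field_simp
          have h3 : c' / L * Real.log (Real.sqrt n) ≤ c' * Real.log (Real.sqrt n) :=
            mul_le_mul_of_nonneg_right (div_le_self hc'0.le hL1) hlsn
          nlinarith
        have final := mul_le_mul_of_nonneg_left hωlog
          (by positivity : (0:ℝ) ≤ 2 * n)
        calc Real.log (h ^ n) * (-(2 * ω)) = 2 * n * (ω * (-Real.log h)) := by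
              rw [hlogh]; ring
          _ ≤ 2 * n * (c' * (Real.log (Real.sqrt n) + 1)) := final
          _ = 2 * n * c' * (Real.log (Real.sqrt n) + 1) := by ring


end VarBesov
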